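/- Let N be the 2n×2n matrix over K defined by N_{b,a} = B^{(2n−1−b) b}_{a (2n−1−a)} for a, b ∈ {0, ..., 2n−1} (the matrix of B on its invariant subspace with basis {e_{(a, 2n−1−a)}}). Then the characteristic polynomial of N equals (X − u⁻¹)^n · (X + u)^{n−1} · (X + u^{2n+1}); equivalently, the eigenvalues of the braiding matrix B on this subspace are q^{−1/4} = u⁻¹ with multiplicity n, −q^{1/4} = −u with multiplicity n−1, and −q^{(2n+1)/4} = −u^{2n+1} with multiplicity 1. -/

import Mathlib

noncomputable section

/-- The coefficient field `K = ℂ(u)`, the field of rational functions in `u`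
over `ℂ` (`u` plays the role of `q^{1/4}`, `q = u⁴`). -/
abbrev FK : Type := RatFunc ℂ

/-- The variable `u` of `K = ℂ(u)`. -/
def U : FK := RatFunc.X

/-- The imaginary unit `i ∈ ℂ ⊆ ℂ(u)`. -/
def IC : FK := RatFunc.C Complex.I

/-- The fusion matrix `M` of the fundamental `2n`-dimensional representation of
`C_n`: `M_{a,b} = 0` if `b ≠ 2n-1-a`, `M_{a,2n-1-a} = i·u^{n-a-1}` for `a ≥ n`,
and `M_{a,2n-1-a} = -i·u^{n-a}` for `a < n`. -/
def MC (n a b : ℕ) : FK :=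
  if a + b + 1 = 2 * n then
    if n ≤ a then IC * U ^ ((n : ℤ) - a - 1) else -IC * U ^ ((n : ℤ) - a)
  else 0

/-- The wall-crossing coefficients `β_a^b` (`a < b`) of the braiding matrix
of `C_n`: `(u - u⁻¹)u^{b-a}` if `a, b` are both `≤ n-1` or both `≥ n`, and
`(u⁻¹ - u)u^{b-a+1} + δ_{a,2n-1-b}(u⁻¹ - u)` otherwise. -/
def betaC (n a b : ℕ) : FK :=
  if (a < n ∧ b < n) ∨ (n ≤ a ∧ n ≤ b) then
    (U - U⁻¹) * U ^ ((b : ℤ) - a)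
  else
    (U⁻¹ - U) * U ^ ((b : ℤ) - a + 1) +
      (if a + b + 1 = 2 * n then U⁻¹ - U else 0)

/-- Coefficients of the braiding matrix of `C_n`:
`BC n b d a c = B^{bd}_{ac}`, the coefficient of `e_{(b,d)}` in `B e_{(a,c)}`.
For `a + c ≠ 2n-1`: `B e_{(a,c)} = u⁻¹ e_{(a,c)}` if `a = c`,
`B e_{(a,c)} = e_{(c,a)}` if `a > c`, and
`B e_{(a,c)} = e_{(c,a)} + (u⁻¹ - u) e_{(a,c)}` if `a < c`.
For `a + c = 2n-1`:
`B e_{(a,2n-1-a)} = u e_{(2n-1-a,a)} + Σ_{b=a+1}^{2n-1} β_a^b e_{(2n-1-b,b)}`. -/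
def BC (n b d a c : ℕ) : FK :=
  if a + c + 1 = 2 * n then
    if b + d + 1 = 2 * n then
      if d = a then U else if a < d then betaC n a d else 0
    else 0
  else if a = c then (if b = a ∧ d = c then U⁻¹ else 0)
  else if c < a then (if b = c ∧ d = a then 1 else 0)
  else (if b = c ∧ d = a then (1 : FK) else 0) +
    (if b = a ∧ d = c then U⁻¹ - U else 0)

/-- The braiding matrix `B` of `C_n` as a matrix indexed by pairs `(a, c)`,
with `BmatC n (b, d) (a, c) = B^{bd}_{ac}`. -/
def BmatC (n : ℕ) :
    Matrix (Fin (2 * n) × Fin (2 * n)) (Fin (2 * n) × Fin (2 * n)) FK :=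
  Matrix.of fun p q => BC n p.1 p.2 q.1 q.2

/-- The matrix of the braiding `B` of `C_n` on its invariant subspace with
basis `{e_{(a, 2n-1-a)} : 0 ≤ a ≤ 2n-1}`. -/
def NC (n : ℕ) : Matrix (Fin (2 * n)) (Fin (2 * n)) FK :=
  Matrix.of fun b a => BC n b (2 * n - 1 - (b : ℕ)) a (2 * n - 1 - (a : ℕ))


namespace C14

open Finset Polynomial

lemma hU : (U : FK) ≠ 0 := RatFunc.X_ne_zero

/-- clean formula for the matrix `NC` -/
def NF (n b a : ℕ) : FK :=
  if a + b + 1 = 2 * n then U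
  else if 2 * n < a + b + 1 then 0
  else if a < n ∧ b < n then
    (U⁻¹ - U) * U ^ ((n : ℤ) + n - a - b) + (if a = b then U⁻¹ - U else 0)
  else (U - U⁻¹) * U ^ ((n : ℤ) + n - 1 - a - b)

lemma NF_anti {n b a : ℕ} (h : a + b + 1 = 2 * n) : NF n b a = U := by
  rw [NF, if_pos h]

lemma NF_zero {n b a : ℕ} (h : 2 * n < a + b + 1) : NF n b a = 0 := by
  rw [NF, if_neg (by omega), if_pos h]

lemma NF_both {n b a : ℕ} (ha : a < n) (hb : b < n) (hne : a ≠ b)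
    (hlt : a + b + 1 < 2 * n) :
    NF n b a = (U⁻¹ - U) * U ^ ((n : ℤ) + n - a - b) := by
  rw [NF, if_neg (by omega), if_neg (by omega), if_pos ⟨ha, hb⟩, if_neg hne, add_zero]

lemma NF_diag {n b a : ℕ} (ha : a < n) (hb : b < n) (he : a = b)
    (hlt : a + b + 1 < 2 * n) :
    NF n b a = (U⁻¹ - U) * U ^ ((n : ℤ) + n - a - b) + (U⁻¹ - U) := by
  rw [NF, if_neg (by omega), if_neg (by omega), if_pos ⟨ha, hb⟩, if_pos he]

lemma NF_mixed {n b a : ℕ} (h : ¬(a < n ∧ b < n)) (hlt : a + b + 1 < 2 * n) :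
    NF n b a = (U - U⁻¹) * U ^ ((n : ℤ) + n - 1 - a - b) := by
  rw [NF, if_neg (by omega), if_neg (by omega), if_neg (by tauto)]

lemma NC_eq {n : ℕ} (hn : 1 ≤ n) (b a : Fin (2 * n)) :
    NC n b a = NF n (b : ℕ) (a : ℕ) := by
  have hb2 : (b : ℕ) < 2 * n := b.isLt
  have ha2 : (a : ℕ) < 2 * n := a.isLt
  simp only [NC, Matrix.of_apply, BC]
  rw [if_pos (by omega : (a : ℕ) + (2 * n - 1 - (a : ℕ)) + 1 = 2 * n),
    if_pos (by omega : (b : ℕ) + (2 * n - 1 - (b : ℕ)) + 1 = 2 * n)]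
  by_cases h1 : (a : ℕ) + (b : ℕ) + 1 = 2 * n
  · rw [if_pos (by omega : 2 * n - 1 - (b : ℕ) = (a : ℕ)), NF_anti h1]
  · rw [if_neg (by omega : ¬ 2 * n - 1 - (b : ℕ) = (a : ℕ))]
    by_cases h2 : 2 * n < (a : ℕ) + (b : ℕ) + 1
    · rw [if_neg (by omega : ¬ (a : ℕ) < 2 * n - 1 - (b : ℕ)), NF_zero h2]
    · rw [if_pos (by omega : (a : ℕ) < 2 * n - 1 - (b : ℕ)), betaC]
      by_cases h3 : (a : ℕ) < n ∧ (b : ℕ) < n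
      · rw [if_neg (by omega : ¬(((a:ℕ) < n ∧ 2*n-1-(b:ℕ) < n) ∨ (n ≤ (a:ℕ) ∧ n ≤ 2*n-1-(b:ℕ))))]
        rw [show (((2*n-1-(b:ℕ) : ℕ)) : ℤ) - (a:ℕ) + 1 = (n : ℤ) + n - a - b by omega]
        by_cases h4 : (a : ℕ) = (b : ℕ)
        · rw [if_pos (by omega : (a:ℕ) + (2*n-1-(b:ℕ)) + 1 = 2*n), NF_diag h3.1 h3.2 h4 (by omega)]
        · rw [if_neg (by omega : ¬ (a:ℕ) + (2*n-1-(b:ℕ)) + 1 = 2*n), NF_both h3.1 h3.2 h4 (by omega),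
            add_zero]
      · rw [if_pos (by omega : (((a:ℕ) < n ∧ 2*n-1-(b:ℕ) < n) ∨ (n ≤ (a:ℕ) ∧ n ≤ 2*n-1-(b:ℕ))))]
        rw [show (((2*n-1-(b:ℕ) : ℕ)) : ℤ) - (a:ℕ) = (n : ℤ) + n - 1 - a - b by omega]
        rw [NF_mixed h3 (by omega)]

end C14
namespace C14

open Finset Polynomial

/-- column of `P` with eigenvalue `u⁻¹` (j = 0..n-2) -/
def pcol (n j : ℕ) : ℕ → FK := fun a =>
  if a = j then 1 else if a = j + 1 then -U
  else if a + j + 2 = 2 * n then -U else if a + j + 1 = 2 * n then U ^ 2 else 0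

/-- column of `P` with eigenvalue `-u` (j = 0..n-2) -/
def wcol (n j : ℕ) : ℕ → FK := fun a =>
  if a = j then -1 else if a = j + 1 then U
  else if a + j + 2 = 2 * n then -U⁻¹ else if a + j + 1 = 2 * n then 1 else 0

/-- middle column of `P`, eigenvalue `u⁻¹` -/
def vcol (n : ℕ) : ℕ → FK := fun a =>
  if a + 1 = n then 1 else if a = n then U ^ 2 else 0

/-- last column of `P`, eigenvalue `-u^{2n+1}` -/
def zcol (n : ℕ) : ℕ → FK := fun a =>
  if a < n then -U ^ ((n : ℤ) + n - a)
  else if a < 2 * n then U ^ ((n : ℤ) + n - 1 - a) else 0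

lemma sum_four {n j i3 i4 : ℕ} (hj : j + 2 ≤ n) (h3 : i3 + j + 2 = 2 * n)
    (h4 : i4 + j + 1 = 2 * n) (F : ℕ → FK) (c1 c2 c3 c4 : FK)
    (col : ℕ → FK)
    (hcol : ∀ a, col a = if a = j then c1 else if a = j + 1 then c2
      else if a + j + 2 = 2 * n then c3 else if a + j + 1 = 2 * n then c4 else 0) :
    ∑ a ∈ Finset.range (2 * n), F a * col a
      = F j * c1 + F (j + 1) * c2 + F i3 * c3 + F i4 * c4 := by
  have key : ∀ a ∈ Finset.range (2 * n), F a * col a =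
      (if a = j then F j * c1 else 0) + ((if a = j + 1 then F (j+1) * c2 else 0)
        + ((if a = i3 then F i3 * c3 else 0) + (if a = i4 then F i4 * c4 else 0))) := by
    intro a _
    rw [hcol]
    by_cases e1 : a = j
    · subst e1
      rw [if_pos rfl, if_pos rfl, if_neg (by omega), if_neg (by omega), if_neg (by omega)]
      ring
    by_cases e2 : a = j + 1
    · subst e2
      rw [if_neg e1, if_pos rfl, if_neg e1, if_pos rfl, if_neg (by omega), if_neg (by omega)]
      ring
    by_cases e3 : a = i3
    · subst e3
      rw [if_neg e1, if_neg e2, if_pos (by omega), if_neg e1, if_neg e2, if_pos rfl,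
        if_neg (by omega)]
      ring
    by_cases e4 : a = i4
    · subst e4
      rw [if_neg e1, if_neg e2, if_neg (by omega), if_pos (by omega), if_neg e1, if_neg e2,
        if_neg (by omega), if_pos rfl]
      ring
    · rw [if_neg e1, if_neg e2, if_neg (by omega), if_neg (by omega), if_neg e1, if_neg e2,
        if_neg e3, if_neg e4]
      ring
  rw [Finset.sum_congr rfl key, Finset.sum_add_distrib, Finset.sum_add_distrib,
    Finset.sum_add_distrib, Finset.sum_ite_eq' (Finset.range (2*n)) j (fun _ => F j * c1),
    Finset.sum_ite_eq' (Finset.range (2*n)) (j+1) (fun _ => F (j+1) * c2),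
    Finset.sum_ite_eq' (Finset.range (2*n)) i3 (fun _ => F i3 * c3),
    Finset.sum_ite_eq' (Finset.range (2*n)) i4 (fun _ => F i4 * c4),
    if_pos (Finset.mem_range.mpr (by omega)), if_pos (Finset.mem_range.mpr (by omega)),
    if_pos (Finset.mem_range.mpr (by omega)), if_pos (Finset.mem_range.mpr (by omega))]
  ring

lemma sum_two {n k : ℕ} (hk : k + 1 = n) (F : ℕ → FK) :
    ∑ a ∈ Finset.range (2 * n), F a * vcol n a = F k * 1 + F (k + 1) * U ^ 2 := by
  have key : ∀ a ∈ Finset.range (2 * n), F a * vcol n a =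
      (if a = k then F k * 1 else 0) + (if a = k + 1 then F (k+1) * U ^ 2 else 0) := by
    intro a _
    rw [vcol]
    by_cases e1 : a = k
    · subst e1; rw [if_pos (by omega), if_pos rfl, if_neg (by omega)]; ring
    by_cases e2 : a = k + 1
    · subst e2; rw [if_neg (by omega), if_pos (by omega), if_neg e1, if_pos rfl]; ring
    · rw [if_neg (by omega), if_neg (by omega), if_neg e1, if_neg e2]; ring
  rw [Finset.sum_congr rfl key, Finset.sum_add_distrib,
    Finset.sum_ite_eq' (Finset.range (2*n)) k (fun _ => F k * 1),
    Finset.sum_ite_eq' (Finset.range (2*n)) (k+1) (fun _ => F (k+1) * U ^ 2),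
    if_pos (Finset.mem_range.mpr (by omega)), if_pos (Finset.mem_range.mpr (by omega))]

end C14
namespace C14

open Finset Polynomial

lemma Usplit (e E : ℤ) (d : ℕ) (h : e = E + d) : (U : FK) ^ e = U ^ E * U ^ d := by
  subst h; rw [zpow_add₀ hU, zpow_natCast]

lemma Une (E : ℤ) : (U : FK) ^ E ≠ 0 := zpow_ne_zero E hU

set_option maxHeartbeats 1000000 in
lemma eig_p {n j b : ℕ} (hj : j + 2 ≤ n) (hb : b < 2 * n) :
    ∑ a ∈ Finset.range (2 * n), NF n b a * pcol n j a = U⁻¹ * pcol n j b := by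
  obtain ⟨i3, h3⟩ : ∃ i3, i3 + j + 2 = 2 * n := ⟨2*n - 2 - j, by omega⟩
  obtain ⟨i4, h4⟩ : ∃ i4, i4 + j + 1 = 2 * n := ⟨2*n - 1 - j, by omega⟩
  rw [sum_four hj h3 h4 (NF n b) 1 (-U) (-U) (U ^ 2) (pcol n j) (fun a => rfl)]
  simp only [pcol]
  by_cases c1 : b < j
  · rw [NF_both (by omega) (by omega) (by omega) (by omega),
      NF_both (by omega) (by omega) (by omega) (by omega),
      NF_mixed (by omega) (by omega), NF_mixed (by omega) (by omega),
      if_neg (by omega), if_neg (by omega), if_neg (by omega), if_neg (by omega),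
      show (n:ℤ) + n - 1 - i3 - b = (j:ℤ) + 1 - b by omega,
      show (n:ℤ) + n - 1 - i4 - b = (j:ℤ) - b by omega,
      Usplit ((n:ℤ) + n - j - b) ((n:ℤ) + n - (j+1:ℕ) - b) 1 (by push_cast; ring),
      Usplit ((j:ℤ) + 1 - b) ((j:ℤ) - b) 1 (by ring)]
    field_simp [hU]
    ring
  by_cases c2 : b = j
  · subst c2
    rw [NF_diag (by omega) (by omega) rfl (by omega),
      NF_both (by omega) (by omega) (by omega) (by omega),
      NF_mixed (by omega) (by omega), NF_anti (by omega), if_pos rfl,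
      show (n:ℤ) + n - 1 - i3 - b = 1 by omega,
      Usplit ((n:ℤ) + n - b - b) ((n:ℤ) + n - (b+1:ℕ) - b) 1 (by push_cast; ring),
      zpow_one]
    field_simp [hU]
    ring
  by_cases c3 : b = j + 1
  · subst c3
    rw [NF_both (by omega) (by omega) (by omega) (by omega),
      NF_diag (by omega) (by omega) rfl (by omega),
      NF_anti (by omega), NF_zero (by omega), if_neg (by omega), if_pos rfl,
      Usplit ((n:ℤ) + n - j - (j+1:ℕ)) ((n:ℤ) + n - (j+1:ℕ) - (j+1:ℕ)) 1 (by push_cast; ring)]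
    field_simp [hU]
    ring
  by_cases c4 : b < i3
  · have hb1 : j + 1 < b := by omega
    have z3 : NF n b i3 = 0 := NF_zero (by omega)
    have z4 : NF n b i4 = 0 := NF_zero (by omega)
    rw [z3, z4, if_neg (by omega), if_neg (by omega), if_neg (by omega), if_neg (by omega)]
    by_cases c5 : b < n
    · rw [NF_both (by omega) (by omega) (by omega) (by omega),
        NF_both (by omega) (by omega) (by omega) (by omega),
        Usplit ((n:ℤ) + n - j - b) ((n:ℤ) + n - (j+1:ℕ) - b) 1 (by push_cast; ring)]
      field_simp [hU]
      ring
    · rw [NF_mixed (by omega) (by omega), NF_mixed (by omega) (by omega),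
        Usplit ((n:ℤ) + n - 1 - j - b) ((n:ℤ) + n - 1 - (j+1:ℕ) - b) 1 (by push_cast; ring)]
      field_simp [hU]
      ring
  by_cases c6 : b = i3
  · subst c6
    rw [NF_mixed (by omega) (by omega), NF_anti (by omega),
      NF_zero (by omega), NF_zero (by omega),
      if_neg (by omega), if_neg (by omega), if_pos (by omega),
      show (n:ℤ) + n - 1 - j - b = 1 by omega, zpow_one]
    field_simp [hU]
    ring
  by_cases c7 : b = i4
  · subst c7
    rw [NF_anti (by omega), NF_zero (by omega), NF_zero (by omega), NF_zero (by omega),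
      if_neg (by omega), if_neg (by omega), if_neg (by omega), if_pos (by omega)]
    rw [pow_two]
    field_simp [hU]
    ring
  · rw [NF_zero (by omega), NF_zero (by omega), NF_zero (by omega), NF_zero (by omega),
      if_neg (by omega), if_neg (by omega), if_neg (by omega), if_neg (by omega)]
    ring

end C14
namespace C14

open Finset Polynomial

set_option maxHeartbeats 1000000 in
lemma eig_w {n j b : ℕ} (hj : j + 2 ≤ n) (hb : b < 2 * n) :
    ∑ a ∈ Finset.range (2 * n), NF n b a * wcol n j a = (-U) * wcol n j b := by
  obtain ⟨i3, h3⟩ : ∃ i3, i3 + j + 2 = 2 * n := ⟨2*n - 2 - j, by omega⟩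
  obtain ⟨i4, h4⟩ : ∃ i4, i4 + j + 1 = 2 * n := ⟨2*n - 1 - j, by omega⟩
  rw [sum_four hj h3 h4 (NF n b) (-1) U (-U⁻¹) 1 (wcol n j) (fun a => rfl)]
  simp only [wcol]
  by_cases c1 : b < j
  · rw [NF_both (by omega) (by omega) (by omega) (by omega),
      NF_both (by omega) (by omega) (by omega) (by omega),
      NF_mixed (by omega) (by omega), NF_mixed (by omega) (by omega),
      if_neg (by omega), if_neg (by omega), if_neg (by omega), if_neg (by omega),
      show (n:ℤ) + n - 1 - i3 - b = (j:ℤ) + 1 - b by omega,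
      show (n:ℤ) + n - 1 - i4 - b = (j:ℤ) - b by omega,
      Usplit ((n:ℤ) + n - j - b) ((n:ℤ) + n - (j+1:ℕ) - b) 1 (by push_cast; ring),
      Usplit ((j:ℤ) + 1 - b) ((j:ℤ) - b) 1 (by ring)]
    field_simp [hU]
    ring
  by_cases c2 : b = j
  · subst c2
    rw [NF_diag (by omega) (by omega) rfl (by omega),
      NF_both (by omega) (by omega) (by omega) (by omega),
      NF_mixed (by omega) (by omega), NF_anti (by omega), if_pos rfl,
      show (n:ℤ) + n - 1 - i3 - b = 1 by omega,
      Usplit ((n:ℤ) + n - b - b) ((n:ℤ) + n - (b+1:ℕ) - b) 1 (by push_cast; ring),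
      zpow_one]
    field_simp [hU]
    ring
  by_cases c3 : b = j + 1
  · subst c3
    rw [NF_both (by omega) (by omega) (by omega) (by omega),
      NF_diag (by omega) (by omega) rfl (by omega),
      NF_anti (by omega), NF_zero (by omega), if_neg (by omega), if_pos rfl,
      Usplit ((n:ℤ) + n - j - (j+1:ℕ)) ((n:ℤ) + n - (j+1:ℕ) - (j+1:ℕ)) 1 (by push_cast; ring)]
    field_simp [hU]
    ring
  by_cases c4 : b < i3
  · have hb1 : j + 1 < b := by omega
    have z3 : NF n b i3 = 0 := NF_zero (by omega)
    have z4 : NF n b i4 = 0 := NF_zero (by omega)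
    rw [z3, z4, if_neg (by omega), if_neg (by omega), if_neg (by omega), if_neg (by omega)]
    by_cases c5 : b < n
    · rw [NF_both (by omega) (by omega) (by omega) (by omega),
        NF_both (by omega) (by omega) (by omega) (by omega),
        Usplit ((n:ℤ) + n - j - b) ((n:ℤ) + n - (j+1:ℕ) - b) 1 (by push_cast; ring)]
      field_simp [hU]
      ring
    · rw [NF_mixed (by omega) (by omega), NF_mixed (by omega) (by omega),
        Usplit ((n:ℤ) + n - 1 - j - b) ((n:ℤ) + n - 1 - (j+1:ℕ) - b) 1 (by push_cast; ring)]
      field_simp [hU]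
      ring
  by_cases c6 : b = i3
  · subst c6
    rw [NF_mixed (by omega) (by omega), NF_anti (by omega),
      NF_zero (by omega), NF_zero (by omega),
      if_neg (by omega), if_neg (by omega), if_pos (by omega),
      show (n:ℤ) + n - 1 - j - b = 1 by omega, zpow_one]
    field_simp [hU]
    ring
  by_cases c7 : b = i4
  · subst c7
    rw [NF_anti (by omega), NF_zero (by omega), NF_zero (by omega), NF_zero (by omega),
      if_neg (by omega), if_neg (by omega), if_neg (by omega), if_pos (by omega)]
    ring
  · rw [NF_zero (by omega), NF_zero (by omega), NF_zero (by omega), NF_zero (by omega),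
      if_neg (by omega), if_neg (by omega), if_neg (by omega), if_neg (by omega)]
    ring

set_option maxHeartbeats 1000000 in
lemma eig_v {n k b : ℕ} (hk : k + 1 = n) (hb : b < 2 * n) :
    ∑ a ∈ Finset.range (2 * n), NF n b a * vcol n a = U⁻¹ * vcol n b := by
  rw [sum_two hk (NF n b)]
  simp only [vcol]
  by_cases c1 : b < k
  · rw [NF_both (by omega) (by omega) (by omega) (by omega),
      NF_mixed (by omega) (by omega),
      if_neg (by omega), if_neg (by omega),
      Usplit ((n:ℤ) + n - k - b) ((n:ℤ) + n - 1 - (k+1:ℕ) - b) 2 (by push_cast; ring)]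
    field_simp [hU]
    ring
  by_cases c2 : b = k
  · subst c2
    rw [NF_diag (by omega) (by omega) rfl (by omega), NF_anti (by omega), if_pos (by omega),
      Usplit ((n:ℤ) + n - b - b) 0 2 (by omega), zpow_zero]
    field_simp [hU]
    ring
  by_cases c3 : b = k + 1
  · subst c3
    rw [NF_anti (by omega), NF_zero (by omega), if_neg (by omega), if_pos (by omega)]
    rw [pow_two]
    field_simp
    ring
  · rw [NF_zero (by omega), NF_zero (by omega), if_neg (by omega), if_neg (by omega)]
    ring

end C14
namespace C14

open Finset Polynomial

lemma tele1 (X Y : ℤ) :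
    ((U⁻¹ - U) * U ^ X) * (-(U ^ Y)) = U ^ (X + Y + 1) - U ^ (X + Y - 1) := by
  rw [zpow_add_one₀ hU, zpow_sub_one₀ hU, zpow_add₀ hU]
  field_simp [hU]
  ring

lemma tele2 (X Y : ℤ) :
    ((U - U⁻¹) * U ^ X) * (U ^ Y) = U ^ (X + Y + 1) - U ^ (X + Y - 1) := by
  rw [zpow_add_one₀ hU, zpow_sub_one₀ hU, zpow_add₀ hU]
  field_simp [hU]

set_option maxHeartbeats 1000000 in
lemma eig_z {n b : ℕ} (hn : 1 ≤ n) (hb : b < 2 * n) :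
    ∑ a ∈ Finset.range (2 * n), NF n b a * zcol n a
      = (-U ^ (2 * (n:ℤ) + 1)) * zcol n b := by
  rw [show 2 * n = n + n from by omega, Finset.sum_range_add]
  by_cases cb : b < n
  · -- first half
    have key1 : ∀ i ∈ Finset.range n, NF n b i * zcol n i
        = ((fun i : ℕ => U ^ ((n:ℤ)+n+n+n+1-i-i-b)) i
            - (fun i : ℕ => U ^ ((n:ℤ)+n+n+n+1-i-i-b)) (i+1))
          + (if i = b then (U - U⁻¹) * U ^ ((n:ℤ)+n-b) else 0) := by
      intro i hi
      simp only [Finset.mem_range] at hi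
      simp only []
      rw [show zcol n i = -U ^ ((n:ℤ)+n-i) from by rw [zcol, if_pos hi]]
      by_cases e : i = b
      · subst e
        rw [NF_diag hi hi rfl (by omega), if_pos rfl, add_mul,
          tele1 ((n:ℤ)+n-i-i) ((n:ℤ)+n-i),
          show (n:ℤ)+n-i-i + ((n:ℤ)+n-i) + 1 = (n:ℤ)+n+n+n+1-i-i-i from by ring,
          show (n:ℤ)+n-i-i + ((n:ℤ)+n-i) - 1 = (n:ℤ)+n+n+n+1-(i+1:ℕ)-(i+1:ℕ)-i from by
            push_cast; ring]
        ring
      · rw [NF_both hi cb e (by omega), if_neg e,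
          tele1 ((n:ℤ)+n-i-b) ((n:ℤ)+n-i),
          show (n:ℤ)+n-i-b + ((n:ℤ)+n-i) + 1 = (n:ℤ)+n+n+n+1-i-i-b from by ring,
          show (n:ℤ)+n-i-b + ((n:ℤ)+n-i) - 1 = (n:ℤ)+n+n+n+1-(i+1:ℕ)-(i+1:ℕ)-b from by
            push_cast; ring]
        ring
    -- second half
    have key2 : ∀ i ∈ Finset.range n, NF n b (n+i) * zcol n (n+i)
        = (fun i : ℕ => if i + b + 1 ≤ n then U ^ ((n:ℤ)+n-1-i-i-b) else 0) i
            - (fun i : ℕ => if i + b + 1 ≤ n then U ^ ((n:ℤ)+n-1-i-i-b) else 0) (i+1) := by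
      intro i hi
      simp only [Finset.mem_range] at hi
      simp only []
      rw [show zcol n (n+i) = U ^ ((n:ℤ)+n-1-(n+i:ℕ)) from by
        rw [zcol, if_neg (by omega), if_pos (by omega)]]
      by_cases e1 : i + b + 1 < n
      · rw [NF_mixed (by omega) (by omega), if_pos (by omega), if_pos (by omega),
          tele2 ((n:ℤ)+n-1-(n+i:ℕ)-b) ((n:ℤ)+n-1-(n+i:ℕ)),
          show (n:ℤ)+n-1-(n+i:ℕ)-b + ((n:ℤ)+n-1-(n+i:ℕ)) + 1 = (n:ℤ)+n-1-i-i-b from by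
            push_cast; ring,
          show (n:ℤ)+n-1-(n+i:ℕ)-b + ((n:ℤ)+n-1-(n+i:ℕ)) - 1
              = (n:ℤ)+n-1-(i+1:ℕ)-(i+1:ℕ)-b from by push_cast; ring]
      by_cases e2 : i + b + 1 = n
      · rw [NF_anti (by omega), if_pos (by omega), if_neg (by omega),
          show (n:ℤ)+n-1-(n+i:ℕ) = (b:ℤ) from by omega,
          show (n:ℤ)+n-1-i-i-b = (b:ℤ)+1 from by omega, zpow_add_one₀ hU]
        ring
      · rw [NF_zero (by omega), if_neg (by omega), if_neg (by omega)]
        ring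
    rw [Finset.sum_congr rfl key1, Finset.sum_congr rfl key2, Finset.sum_add_distrib,
      Finset.sum_range_sub' (fun i : ℕ => U ^ ((n:ℤ)+n+n+n+1-i-i-b)),
      Finset.sum_range_sub' (fun i : ℕ => if i + b + 1 ≤ n then U ^ ((n:ℤ)+n-1-i-i-b) else 0),
      Finset.sum_ite_eq' (Finset.range n) b (fun _ => (U - U⁻¹) * U ^ ((n:ℤ)+n-b)),
      if_pos (Finset.mem_range.mpr cb)]
    rw [if_pos (by omega : 0 + b + 1 ≤ n), if_neg (by omega : ¬ (n + b + 1 ≤ n)),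
      show zcol n b = -U ^ ((n:ℤ)+n-b) from by rw [zcol, if_pos cb]]
    rw [show ((n:ℤ)+n+n+n+1-(0:ℕ)-(0:ℕ)-b) = (n:ℤ)+n+n+n+1-b from by push_cast; ring,
      Usplit ((n:ℤ)+n+n+n+1-b) ((n:ℤ)+n-1-b) (2*n+2) (by push_cast; ring),
      Usplit ((n:ℤ)+n+n+n+1-(n:ℕ)-(n:ℕ)-b) ((n:ℤ)+n-1-b) 2 (by push_cast; ring),
      Usplit ((n:ℤ)+n-b) ((n:ℤ)+n-1-b) 1 (by push_cast; ring),
      Usplit ((n:ℤ)+n-1-(0:ℕ)-(0:ℕ)-b) ((n:ℤ)+n-1-b) 0 (by push_cast; ring),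
      Usplit (2*(n:ℤ)+1) 0 (2*n+1) (by push_cast; ring), zpow_zero]
    field_simp [hU]
    ring
  · -- b ≥ n : second half vanishes
    have key2 : ∀ i ∈ Finset.range n, NF n b (n+i) * zcol n (n+i) = 0 := by
      intro i hi
      rw [NF_zero (by omega), zero_mul]
    have key1 : ∀ i ∈ Finset.range n, NF n b i * zcol n i
        = (fun i : ℕ => if i + b + 1 ≤ 2*n then -U ^ ((n:ℤ)+n+n+n-i-i-b) else 0) i
            - (fun i : ℕ => if i + b + 1 ≤ 2*n then -U ^ ((n:ℤ)+n+n+n-i-i-b) else 0) (i+1) := by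
      intro i hi
      simp only [Finset.mem_range] at hi
      simp only []
      rw [show zcol n i = -U ^ ((n:ℤ)+n-i) from by rw [zcol, if_pos hi]]
      by_cases e1 : i + b + 1 < 2*n
      · rw [NF_mixed (by omega) (by omega), if_pos (by omega), if_pos (by omega), mul_neg,
          tele2 ((n:ℤ)+n-1-i-b) ((n:ℤ)+n-i),
          show (n:ℤ)+n-1-i-b + ((n:ℤ)+n-i) + 1 = (n:ℤ)+n+n+n-i-i-b from by ring,
          show (n:ℤ)+n-1-i-b + ((n:ℤ)+n-i) - 1 = (n:ℤ)+n+n+n-(i+1:ℕ)-(i+1:ℕ)-b from by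
            push_cast; ring]
        ring
      by_cases e2 : i + b + 1 = 2*n
      · rw [NF_anti (by omega), if_pos (by omega), if_neg (by omega),
          show (n:ℤ)+n-i = (b:ℤ)+2 - 1 from by omega,
          show (n:ℤ)+n+n+n-i-i-b = (b:ℤ)+2 from by omega, zpow_sub_one₀ hU,
          show ((b:ℤ)+2) = (b:ℤ)+1+1 from by ring, zpow_add_one₀ hU, zpow_add_one₀ hU]
        field_simp [hU]
        ring
      · rw [NF_zero (by omega), if_neg (by omega), if_neg (by omega)]
        ring
    rw [Finset.sum_congr rfl key1, Finset.sum_congr rfl key2, Finset.sum_const, smul_zero,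
      add_zero,
      Finset.sum_range_sub' (fun i : ℕ => if i + b + 1 ≤ 2*n then -U ^ ((n:ℤ)+n+n+n-i-i-b) else 0)]
    rw [if_pos (by omega : 0 + b + 1 ≤ 2*n), if_neg (by omega : ¬ (n + b + 1 ≤ 2*n)),
      show zcol n b = U ^ ((n:ℤ)+n-1-b) from by rw [zcol, if_neg (by omega), if_pos hb],
      show ((n:ℤ)+n+n+n-(0:ℕ)-(0:ℕ)-b) = (n:ℤ)+n+n+n-b from by push_cast; ring,
      Usplit ((n:ℤ)+n+n+n-b) ((n:ℤ)+n-1-b) (2*n+1) (by push_cast; ring),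
      Usplit (2*(n:ℤ)+1) 0 (2*n+1) (by push_cast; ring), zpow_zero]
    ring

end C14
namespace C14

open Finset Polynomial

/-- the `j`-th column of the eigenbasis matrix -/
def colF (n j : ℕ) : ℕ → FK :=
  if j + 1 < n then pcol n j else if j + 1 = n then vcol n
  else if j + 1 < 2 * n then wcol n (j - n) else zcol n

/-- the eigenvalue attached to the `j`-th column -/
def muF (n j : ℕ) : FK :=
  if j < n then U⁻¹ else if j + 2 ≤ 2 * n then -U else -U ^ (2 * (n:ℤ) + 1)

lemma colsum {n : ℕ} (hn : 1 ≤ n) {j b : ℕ} (hj : j < 2 * n) (hb : b < 2 * n) :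
    ∑ a ∈ Finset.range (2 * n), NF n b a * colF n j a = muF n j * colF n j b := by
  by_cases d1 : j + 1 < n
  · rw [colF, if_pos d1, muF, if_pos (by omega)]
    exact eig_p (by omega) hb
  by_cases d2 : j + 1 = n
  · rw [colF, if_neg d1, if_pos d2, muF, if_pos (by omega)]
    exact eig_v d2 hb
  by_cases d3 : j + 1 < 2 * n
  · rw [colF, if_neg d1, if_neg d2, if_pos d3, muF, if_neg (by omega), if_pos (by omega)]
    have hjn : j - n + 2 ≤ n := by omega
    exact eig_w hjn hb
  · rw [colF, if_neg d1, if_neg d2, if_neg d3, muF, if_neg (by omega), if_neg (by omega)]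
    exact eig_z hn hb

/-- eigenbasis matrix -/
def Pm (n : ℕ) : Matrix (Fin (2 * n)) (Fin (2 * n)) FK :=
  Matrix.of fun i j => colF n (j : ℕ) (i : ℕ)

/-- diagonal eigenvalue matrix -/
def Dm (n : ℕ) : Matrix (Fin (2 * n)) (Fin (2 * n)) FK :=
  Matrix.diagonal fun i => muF n (i : ℕ)

lemma NP_eq_PD {n : ℕ} (hn : 1 ≤ n) : NC n * Pm n = Pm n * Dm n := by
  ext b j
  rw [Matrix.mul_apply, Dm, Matrix.mul_diagonal]
  calc ∑ a : Fin (2*n), NC n b a * Pm n a j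
      = ∑ a : Fin (2*n), (fun t => NF n (b:ℕ) t * colF n (j:ℕ) t) (a : ℕ) := by
        apply Finset.sum_congr rfl
        intro a _
        rw [NC_eq hn b a]
        rfl
    _ = ∑ t ∈ Finset.range (2*n), NF n (b:ℕ) t * colF n (j:ℕ) t := by
        simpa using Fin.sum_univ_eq_sum_range (fun t => NF n (b:ℕ) t * colF n (j:ℕ) t) (2*n)
    _ = muF n (j:ℕ) * colF n (j:ℕ) (b:ℕ) := colsum hn j.isLt b.isLt
    _ = Pm n b j * muF n (j:ℕ) := mul_comm _ _

end C14
namespace C14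

open Finset Polynomial

lemma algU : (algebraMap (Polynomial ℂ) FK) Polynomial.X = U := RatFunc.algebraMap_X

lemma poly_ne {p : Polynomial ℂ} (hp : p ≠ 0) : (algebraMap (Polynomial ℂ) FK) p ≠ 0 :=
  fun h => hp (RatFunc.algebraMap_injective ℂ (by simpa using h))

lemma Unat (n : ℕ) : (U : FK) ^ (2 * (n:ℤ) + 1) = U ^ (2 * n + 1) := by
  rw [show 2 * (n:ℤ) + 1 = ((2 * n + 1 : ℕ) : ℤ) from by push_cast; ring, zpow_natCast]

lemma s1_ne : (U⁻¹ + U : FK) ≠ 0 := by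
  intro h
  have h2 : (1 : FK) + U ^ 2 = (U⁻¹ + U) * U := by field_simp [hU]
  have h3 : (1 : FK) + U ^ 2 = 0 := by rw [h2, h, zero_mul]
  have h4 : ((algebraMap (Polynomial ℂ) FK)) (1 + Polynomial.X ^ 2) = 0 := by
    rw [map_add, map_one, map_pow, algU]; exact h3
  exact poly_ne (fun hq => by simpa using congrArg (Polynomial.eval 0) hq) h4

lemma s2_ne (n : ℕ) : (U⁻¹ + U ^ (2 * (n:ℤ) + 1) : FK) ≠ 0 := by
  intro h
  rw [Unat] at h
  have h2 : (1 : FK) + U ^ (2 * n + 2) = (U⁻¹ + U ^ (2 * n + 1)) * U := by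
    field_simp [hU]; ring
  have h3 : (1 : FK) + U ^ (2 * n + 2) = 0 := by rw [h2, h, zero_mul]
  have h4 : ((algebraMap (Polynomial ℂ) FK)) (1 + Polynomial.X ^ (2 * n + 2)) = 0 := by
    rw [map_add, map_one, map_pow, algU]; exact h3
  exact poly_ne (fun hq => by simpa using congrArg (Polynomial.eval 0) hq) h4

lemma s3_ne (n : ℕ) (hn : 1 ≤ n) : (U ^ (2 * (n:ℤ) + 1) - U : FK) ≠ 0 := by
  intro h
  rw [Unat] at h
  have h4 : ((algebraMap (Polynomial ℂ) FK)) (Polynomial.X ^ (2 * n + 1) - Polynomial.X) = 0 := by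
    rw [map_sub, map_pow, algU]; exact h
  refine poly_ne (fun hq => ?_) h4
  have h5 : (Polynomial.X ^ (2*n+1) - Polynomial.X : Polynomial ℂ).coeff (2*n+1) = 1 := by
    rw [Polynomial.coeff_sub, Polynomial.coeff_X_pow, if_pos rfl, Polynomial.coeff_X,
      if_neg (by omega), sub_zero]
  rw [hq] at h5
  simp at h5

end C14
namespace C14

open Finset Polynomial

def ccF (n : ℕ) (c : Fin (2*n) → FK) : ℕ → FK :=
  fun t => if h : t < 2*n then c ⟨t, h⟩ else 0

def xF (n : ℕ) (c : Fin (2*n) → FK) : ℕ → FK :=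
  fun i => ∑ t ∈ Finset.range n, ccF n c t * colF n t i

def yF (n : ℕ) (c : Fin (2*n) → FK) : ℕ → FK :=
  fun i => ∑ t ∈ Finset.range (n-1), ccF n c (n+t) * colF n (n+t) i

def zF (n : ℕ) (c : Fin (2*n) → FK) : ℕ → FK :=
  fun i => ccF n c (2*n-1) * colF n (2*n-1) i

lemma hsplit {n : ℕ} (hn : 1 ≤ n) (g : ℕ → FK) :
    ∑ t ∈ Finset.range (2*n), g t
      = (∑ t ∈ Finset.range n, g t) + ((∑ t ∈ Finset.range (n-1), g (n+t)) + g (2*n-1)) := by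
  calc ∑ t ∈ Finset.range (2*n), g t
      = ∑ t ∈ Finset.range (n + ((n-1)+1)), g t := by
        rw [show n + ((n-1)+1) = 2*n from by omega]
    _ = (∑ t ∈ Finset.range n, g t) + ∑ t ∈ Finset.range ((n-1)+1), g (n+t) :=
        Finset.sum_range_add g n ((n-1)+1)
    _ = (∑ t ∈ Finset.range n, g t) + ((∑ t ∈ Finset.range (n-1), g (n+t)) + g (n+(n-1))) := by
        rw [Finset.sum_range_succ]
    _ = (∑ t ∈ Finset.range n, g t) + ((∑ t ∈ Finset.range (n-1), g (n+t)) + g (2*n-1)) := by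
        rw [show n + (n-1) = 2*n-1 from by omega]

lemma E0 {n : ℕ} (hn : 1 ≤ n) (c : Fin (2*n) → FK) (hc : (Pm n).mulVec c = 0)
    {i : ℕ} (hi : i < 2*n) : xF n c i + yF n c i + zF n c i = 0 := by
  have h1 : ∑ j : Fin (2*n), Pm n ⟨i, hi⟩ j * c j = 0 := by
    have := congrFun hc ⟨i, hi⟩
    simpa [Matrix.mulVec, dotProduct] using this
  have h2 : ∑ t ∈ Finset.range (2*n), ccF n c t * colF n t i = 0 := by
    rw [← h1, ← Fin.sum_univ_eq_sum_range (fun t => ccF n c t * colF n t i) (2*n)]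
    apply Finset.sum_congr rfl
    intro j _
    rw [ccF]
    rw [dif_pos j.isLt]
    simp only [Fin.eta]
    rw [Pm, Matrix.of_apply, mul_comm]
  rw [hsplit hn] at h2
  simpa [xF, yF, zF, add_assoc] using h2

lemma EX {n : ℕ} (hn : 1 ≤ n) (c : Fin (2*n) → FK) {i : ℕ} (hi : i < 2*n) :
    ∑ a ∈ Finset.range (2*n), NF n i a * xF n c a = U⁻¹ * xF n c i := by
  simp only [xF]
  calc ∑ a ∈ Finset.range (2*n), NF n i a * ∑ t ∈ Finset.range n, ccF n c t * colF n t a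
      = ∑ a ∈ Finset.range (2*n), ∑ t ∈ Finset.range n,
          NF n i a * (ccF n c t * colF n t a) :=
        Finset.sum_congr rfl (fun a _ => Finset.mul_sum _ _ _)
    _ = ∑ t ∈ Finset.range n, ∑ a ∈ Finset.range (2*n),
          NF n i a * (ccF n c t * colF n t a) := Finset.sum_comm
    _ = ∑ t ∈ Finset.range n, ccF n c t * (muF n t * colF n t i) := by
        apply Finset.sum_congr rfl
        intro t ht
        have ht' : t < n := Finset.mem_range.mp ht
        calc ∑ a ∈ Finset.range (2*n), NF n i a * (ccF n c t * colF n t a)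
            = ccF n c t * ∑ a ∈ Finset.range (2*n), NF n i a * colF n t a := by
              rw [Finset.mul_sum]
              exact Finset.sum_congr rfl (fun a _ => by ring)
          _ = ccF n c t * (muF n t * colF n t i) := by rw [colsum hn (by omega) hi]
    _ = U⁻¹ * ∑ t ∈ Finset.range n, ccF n c t * colF n t i := by
        rw [Finset.mul_sum]
        apply Finset.sum_congr rfl
        intro t ht
        rw [muF, if_pos (Finset.mem_range.mp ht)]
        ring

lemma EY {n : ℕ} (hn : 1 ≤ n) (c : Fin (2*n) → FK) {i : ℕ} (hi : i < 2*n) :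
    ∑ a ∈ Finset.range (2*n), NF n i a * yF n c a = (-U) * yF n c i := by
  simp only [yF]
  calc ∑ a ∈ Finset.range (2*n), NF n i a * ∑ t ∈ Finset.range (n-1),
          ccF n c (n+t) * colF n (n+t) a
      = ∑ a ∈ Finset.range (2*n), ∑ t ∈ Finset.range (n-1),
          NF n i a * (ccF n c (n+t) * colF n (n+t) a) :=
        Finset.sum_congr rfl (fun a _ => Finset.mul_sum _ _ _)
    _ = ∑ t ∈ Finset.range (n-1), ∑ a ∈ Finset.range (2*n),
          NF n i a * (ccF n c (n+t) * colF n (n+t) a) := Finset.sum_comm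
    _ = ∑ t ∈ Finset.range (n-1), ccF n c (n+t) * (muF n (n+t) * colF n (n+t) i) := by
        apply Finset.sum_congr rfl
        intro t ht
        have ht' : t < n - 1 := Finset.mem_range.mp ht
        calc ∑ a ∈ Finset.range (2*n), NF n i a * (ccF n c (n+t) * colF n (n+t) a)
            = ccF n c (n+t) * ∑ a ∈ Finset.range (2*n), NF n i a * colF n (n+t) a := by
              rw [Finset.mul_sum]
              exact Finset.sum_congr rfl (fun a _ => by ring)
          _ = ccF n c (n+t) * (muF n (n+t) * colF n (n+t) i) := by
              rw [colsum hn (by omega) hi]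
    _ = (-U) * ∑ t ∈ Finset.range (n-1), ccF n c (n+t) * colF n (n+t) i := by
        rw [Finset.mul_sum]
        apply Finset.sum_congr rfl
        intro t ht
        have ht' : t < n - 1 := Finset.mem_range.mp ht
        rw [muF, if_neg (by omega), if_pos (by omega)]
        ring

lemma EZ {n : ℕ} (hn : 1 ≤ n) (c : Fin (2*n) → FK) {i : ℕ} (hi : i < 2*n) :
    ∑ a ∈ Finset.range (2*n), NF n i a * zF n c a
      = (-U ^ (2*(n:ℤ)+1)) * zF n c i := by
  simp only [zF]
  calc ∑ a ∈ Finset.range (2*n), NF n i a * (ccF n c (2*n-1) * colF n (2*n-1) a)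
      = ccF n c (2*n-1) * ∑ a ∈ Finset.range (2*n), NF n i a * colF n (2*n-1) a := by
        rw [Finset.mul_sum]
        exact Finset.sum_congr rfl (fun a _ => by ring)
    _ = ccF n c (2*n-1) * (muF n (2*n-1) * colF n (2*n-1) i) := by
        rw [colsum hn (by omega) hi]
    _ = (-U ^ (2*(n:ℤ)+1)) * (ccF n c (2*n-1) * colF n (2*n-1) i) := by
        rw [muF, if_neg (by omega), if_neg (by omega)]
        ring

end C14
namespace C14

open Finset Polynomial

lemma colF_p_small {n t b : ℕ} (ht : t < n) (hb : b < n) :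
    colF n t b = if b = t then 1 else if b = t + 1 then -U else 0 := by
  by_cases h1 : t + 1 < n
  · rw [colF, if_pos h1, pcol]
    by_cases e1 : b = t
    · rw [if_pos e1, if_pos e1]
    by_cases e2 : b = t + 1
    · rw [if_neg e1, if_pos e2, if_neg e1, if_pos e2]
    · rw [if_neg e1, if_neg e2, if_neg (by omega), if_neg (by omega), if_neg e1, if_neg e2]
  · have h2 : t + 1 = n := by omega
    rw [colF, if_neg h1, if_pos h2, vcol]
    by_cases e1 : b = t
    · rw [if_pos (by omega), if_pos e1]
    · rw [if_neg (by omega), if_neg (by omega), if_neg e1, if_neg (by omega)]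

lemma colF_w_small {n t b : ℕ} (ht : t + 1 < n) (hb : b < n) :
    colF n (n + t) b = if b = t then -1 else if b = t + 1 then U else 0 := by
  rw [colF, if_neg (by omega), if_neg (by omega), if_pos (by omega),
    show n + t - n = t from by omega, wcol]
  by_cases e1 : b = t
  · rw [if_pos e1, if_pos e1]
  by_cases e2 : b = t + 1
  · rw [if_neg e1, if_pos e2, if_neg e1, if_pos e2]
  · rw [if_neg e1, if_neg e2, if_neg (by omega), if_neg (by omega), if_neg e1, if_neg e2]

lemma colF_z_last {n : ℕ} (hn : 1 ≤ n) : colF n (2*n-1) (2*n-1) = 1 := by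
  rw [colF, if_neg (by omega), if_neg (by omega), if_neg (by omega), zcol,
    if_neg (by omega), if_pos (by omega),
    show (n:ℤ) + n - 1 - (2*n-1 : ℕ) = 0 from by omega, zpow_zero]

lemma kerP {n : ℕ} (hn : 1 ≤ n) (c : Fin (2*n) → FK) (hc : (Pm n).mulVec c = 0) :
    c = 0 := by
  have E1 : ∀ i, i < 2*n → U⁻¹ * xF n c i + (-U) * yF n c i
      + (-U ^ (2*(n:ℤ)+1)) * zF n c i = 0 := by
    intro i hi
    have h0 : ∑ a ∈ Finset.range (2*n), NF n i a * (xF n c a + yF n c a + zF n c a) = 0 :=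
      Finset.sum_eq_zero (fun a ha => by
        rw [E0 hn c hc (Finset.mem_range.mp ha), mul_zero])
    calc U⁻¹ * xF n c i + (-U) * yF n c i + (-U ^ (2*(n:ℤ)+1)) * zF n c i
        = (∑ a ∈ Finset.range (2*n), NF n i a * xF n c a)
          + (∑ a ∈ Finset.range (2*n), NF n i a * yF n c a)
          + (∑ a ∈ Finset.range (2*n), NF n i a * zF n c a) := by
          rw [EX hn c hi, EY hn c hi, EZ hn c hi]
      _ = ∑ a ∈ Finset.range (2*n), NF n i a * (xF n c a + yF n c a + zF n c a) := by
          rw [← Finset.sum_add_distrib, ← Finset.sum_add_distrib]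
          exact Finset.sum_congr rfl (fun a _ => by ring)
      _ = 0 := h0
  have E2 : ∀ i, i < 2*n → U⁻¹ * (U⁻¹ * xF n c i) + (-U) * ((-U) * yF n c i)
      + (-U ^ (2*(n:ℤ)+1)) * ((-U ^ (2*(n:ℤ)+1)) * zF n c i) = 0 := by
    intro i hi
    have h0 : ∑ a ∈ Finset.range (2*n), NF n i a
        * (U⁻¹ * xF n c a + (-U) * yF n c a + (-U ^ (2*(n:ℤ)+1)) * zF n c a) = 0 :=
      Finset.sum_eq_zero (fun a ha => by rw [E1 a (Finset.mem_range.mp ha), mul_zero])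
    calc U⁻¹ * (U⁻¹ * xF n c i) + (-U) * ((-U) * yF n c i)
        + (-U ^ (2*(n:ℤ)+1)) * ((-U ^ (2*(n:ℤ)+1)) * zF n c i)
        = U⁻¹ * (∑ a ∈ Finset.range (2*n), NF n i a * xF n c a)
          + (-U) * (∑ a ∈ Finset.range (2*n), NF n i a * yF n c a)
          + (-U ^ (2*(n:ℤ)+1)) * (∑ a ∈ Finset.range (2*n), NF n i a * zF n c a) := by
          rw [EX hn c hi, EY hn c hi, EZ hn c hi]
      _ = ∑ a ∈ Finset.range (2*n), NF n i a
            * (U⁻¹ * xF n c a + (-U) * yF n c a + (-U ^ (2*(n:ℤ)+1)) * zF n c a) := by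
          rw [Finset.mul_sum, Finset.mul_sum, Finset.mul_sum,
            ← Finset.sum_add_distrib, ← Finset.sum_add_distrib]
          exact Finset.sum_congr rfl (fun a _ => by ring)
      _ = 0 := h0
  have hx : ∀ i, i < 2*n → xF n c i = 0 := by
    intro i hi
    have e0 := E0 hn c hc hi
    have e1 := E1 i hi
    have e2 := E2 i hi
    have key : (U⁻¹ + U) * ((U⁻¹ + U ^ (2*(n:ℤ)+1)) * xF n c i) = 0 := by
      linear_combination e2 + (U + U ^ (2*(n:ℤ)+1)) * e1 + (U * U ^ (2*(n:ℤ)+1)) * e0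
    rcases mul_eq_zero.mp key with h | h
    · exact absurd h s1_ne
    rcases mul_eq_zero.mp h with h' | h'
    · exact absurd h' (s2_ne n)
    · exact h'
  have hy : ∀ i, i < 2*n → yF n c i = 0 := by
    intro i hi
    have e0 := E0 hn c hc hi
    have e1 := E1 i hi
    rw [hx i hi] at e0 e1
    have key : (U ^ (2*(n:ℤ)+1) - U) * yF n c i = 0 := by
      linear_combination e1 + (U ^ (2*(n:ℤ)+1)) * e0
    rcases mul_eq_zero.mp key with h | h
    · exact absurd h (s3_ne n hn)
    · exact h
  have hz : ∀ i, i < 2*n → zF n c i = 0 := by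
    intro i hi
    have e0 := E0 hn c hc hi
    rw [hx i hi, hy i hi] at e0
    simpa using e0
  -- extract coefficients in the x-block
  have hcx : ∀ t, t < n → ccF n c t = 0 := by
    intro t
    induction t using Nat.strong_induction_on with
    | _ t IH =>
      intro ht
      have h0 : xF n c t = 0 := hx t (by omega)
      rw [xF] at h0
      have hsum : ∀ s ∈ Finset.range n, ccF n c s * colF n s t
          = (if s = t then ccF n c t else 0)
            + (if s + 1 = t then (-U) * ccF n c s else 0) := by
        intro s hs
        rw [colF_p_small (Finset.mem_range.mp hs) ht]
        by_cases e1 : t = s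
        · rw [if_pos e1, if_pos (by omega), if_neg (by omega)]
          subst e1; ring
        by_cases e2 : t = s + 1
        · rw [if_neg e1, if_pos e2, if_neg (by omega), if_pos (by omega)]
          ring
        · rw [if_neg e1, if_neg e2, if_neg (by omega), if_neg (by omega)]
          ring
      rw [Finset.sum_congr rfl hsum, Finset.sum_add_distrib,
        Finset.sum_ite_eq' (Finset.range n) t (fun _ => ccF n c t),
        if_pos (Finset.mem_range.mpr ht)] at h0
      rcases Nat.eq_zero_or_eq_succ_pred t with h | h
      · rw [Finset.sum_eq_zero (fun s _ => by rw [if_neg (by omega)]), add_zero] at h0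
        exact h0
      · have hsum2 : ∀ s ∈ Finset.range n, (if s + 1 = t then (-U) * ccF n c s else 0)
            = (if s = t - 1 then (-U) * ccF n c s else 0) := by
          intro s _
          by_cases e : s + 1 = t
          · rw [if_pos e, if_pos (by omega)]
          · rw [if_neg e, if_neg (by omega)]
        rw [Finset.sum_congr rfl hsum2,
          Finset.sum_ite_eq' (Finset.range n) (t-1) (fun s => (-U) * ccF n c s),
          if_pos (Finset.mem_range.mpr (by omega)), IH (t-1) (by omega) (by omega),
          mul_zero, add_zero] at h0
        exact h0
  -- extract coefficients in the y-block
  have hcy : ∀ t, t < n - 1 → ccF n c (n + t) = 0 := by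
    intro t
    induction t using Nat.strong_induction_on with
    | _ t IH =>
      intro ht
      have h0 : yF n c t = 0 := hy t (by omega)
      rw [yF] at h0
      have hsum : ∀ s ∈ Finset.range (n-1), ccF n c (n+s) * colF n (n+s) t
          = (if s = t then (-1) * ccF n c (n+t) else 0)
            + (if s + 1 = t then U * ccF n c (n+s) else 0) := by
        intro s hs
        rw [colF_w_small (by have := Finset.mem_range.mp hs; omega) (by omega)]
        by_cases e1 : t = s
        · rw [if_pos e1, if_pos (by omega), if_neg (by omega)]
          subst e1; ring
        by_cases e2 : t = s + 1
        · rw [if_neg e1, if_pos e2, if_neg (by omega), if_pos (by omega)]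
          ring
        · rw [if_neg e1, if_neg e2, if_neg (by omega), if_neg (by omega)]
          ring
      rw [Finset.sum_congr rfl hsum, Finset.sum_add_distrib,
        Finset.sum_ite_eq' (Finset.range (n-1)) t (fun _ => (-1) * ccF n c (n+t)),
        if_pos (Finset.mem_range.mpr ht)] at h0
      rcases Nat.eq_zero_or_eq_succ_pred t with h | h
      · rw [Finset.sum_eq_zero (fun s _ => by rw [if_neg (by omega)]), add_zero] at h0
        have := h0
        simpa using this
      · have hsum2 : ∀ s ∈ Finset.range (n-1), (if s + 1 = t then U * ccF n c (n+s) else 0)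
            = (if s = t - 1 then U * ccF n c (n+s) else 0) := by
          intro s _
          by_cases e : s + 1 = t
          · rw [if_pos e, if_pos (by omega)]
          · rw [if_neg e, if_neg (by omega)]
        rw [Finset.sum_congr rfl hsum2,
          Finset.sum_ite_eq' (Finset.range (n-1)) (t-1) (fun s => U * ccF n c (n+s)),
          if_pos (Finset.mem_range.mpr (by omega)), IH (t-1) (by omega) (by omega),
          mul_zero, add_zero] at h0
        simpa using h0
  -- extract the last coefficient
  have hcz : ccF n c (2*n-1) = 0 := by
    have h0 : zF n c (2*n-1) = 0 := hz (2*n-1) (by omega)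
    rw [zF, colF_z_last hn, mul_one] at h0
    exact h0
  -- conclude
  funext j
  have hj : (j : ℕ) < 2*n := j.isLt
  have hcc : c j = ccF n c (j : ℕ) := by
    rw [ccF, dif_pos hj]
  simp only [Pi.zero_apply]
  rw [hcc]
  by_cases d1 : (j : ℕ) < n
  · exact hcx _ d1
  by_cases d2 : (j : ℕ) < 2*n - 1
  · rw [show (j : ℕ) = n + ((j : ℕ) - n) from by omega]
    exact hcy _ (by omega)
  · rw [show (j : ℕ) = 2*n - 1 from by omega]
    exact hcz

lemma Pm_isUnit {n : ℕ} (hn : 1 ≤ n) : IsUnit (Pm n) := by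
  rw [← Matrix.mulVec_injective_iff_isUnit]
  intro a b hab
  have h : (Pm n).mulVec (a - b) = 0 := by
    rw [Matrix.mulVec_sub, hab, sub_self]
  have := kerP hn (a - b) h
  exact sub_eq_zero.mp this

end C14
namespace C14

open Finset Polynomial

lemma charpoly_NC_eq_D {n : ℕ} (hn : 1 ≤ n) : (NC n).charpoly = (Dm n).charpoly := by
  set f : Matrix (Fin (2*n)) (Fin (2*n)) FK →+* Matrix (Fin (2*n)) (Fin (2*n)) FK[X] :=
    (Polynomial.C : FK →+* FK[X]).mapMatrix with hf
  have h1 : Matrix.charmatrix (NC n) = Matrix.scalar (Fin (2*n)) (X : FK[X]) - f (NC n) := rfl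
  have h2 : Matrix.charmatrix (Dm n) = Matrix.scalar (Fin (2*n)) (X : FK[X]) - f (Dm n) := rfl
  have key : Matrix.charmatrix (NC n) * f (Pm n) = f (Pm n) * Matrix.charmatrix (Dm n) := by
    rw [h1, h2, sub_mul, mul_sub, ← map_mul f, NP_eq_PD hn, map_mul f]
    congr 1
    exact (Matrix.scalar_commute (X : FK[X]) (fun r' => Commute.all _ _) (f (Pm n))).eq
  have hdet := congrArg Matrix.det key
  rw [Matrix.det_mul, Matrix.det_mul] at hdet
  have hPdet : (Pm n).det ≠ 0 :=
    ((Matrix.isUnit_iff_isUnit_det _).mp (Pm_isUnit hn)).ne_zero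
  have hfd : (f (Pm n)).det = Polynomial.C ((Pm n).det) :=
    (RingHom.map_det (Polynomial.C : FK →+* FK[X]) (Pm n)).symm
  have hC : (f (Pm n)).det ≠ 0 := by
    rw [hfd]
    exact fun h => hPdet (by simpa using (Polynomial.C_eq_zero).mp h)
  have : (NC n).charpoly * (f (Pm n)).det = (Dm n).charpoly * (f (Pm n)).det := by
    rw [Matrix.charpoly, Matrix.charpoly, hdet]
    ring
  exact mul_right_cancel₀ hC this

lemma charpoly_D {n : ℕ} :
    (Dm n).charpoly = ∏ i : Fin (2*n), ((X : FK[X]) - C (muF n (i : ℕ))) := by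
  have hdg : Matrix.charmatrix (Dm n)
      = Matrix.diagonal (fun i : Fin (2*n) => (X : FK[X]) - C (muF n (i : ℕ))) := by
    ext i j
    by_cases e : i = j
    · subst e
      rw [Matrix.charmatrix_apply_eq, Matrix.diagonal_apply_eq, Dm, Matrix.diagonal_apply_eq]
    · rw [Matrix.charmatrix_apply_ne _ _ _ e, Matrix.diagonal_apply_ne _ e, Dm,
        Matrix.diagonal_apply_ne _ e, map_zero, neg_zero]
  rw [Matrix.charpoly, hdg, Matrix.det_diagonal]

lemma prod_mu {n : ℕ} (hn : 1 ≤ n) :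
    ∏ i : Fin (2*n), ((X : FK[X]) - C (muF n (i : ℕ)))
      = (X - C U⁻¹) ^ n * (X + C U) ^ (n-1) * (X + C (U ^ (2 * (n:ℤ) + 1))) := by
  have h0 : ∏ i : Fin (2*n), ((X : FK[X]) - C (muF n (i : ℕ)))
      = ∏ t ∈ Finset.range (2*n), ((X : FK[X]) - C (muF n t)) := by
    simpa using Fin.prod_univ_eq_prod_range (fun t => (X : FK[X]) - C (muF n t)) (2*n)
  rw [h0]
  calc ∏ t ∈ Finset.range (2*n), ((X : FK[X]) - C (muF n t))
      = ∏ t ∈ Finset.range (n + ((n-1)+1)), ((X : FK[X]) - C (muF n t)) := by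
        rw [show n + ((n-1)+1) = 2*n from by omega]
    _ = (∏ t ∈ Finset.range n, ((X : FK[X]) - C (muF n t)))
        * ∏ t ∈ Finset.range ((n-1)+1), ((X : FK[X]) - C (muF n (n+t))) :=
        Finset.prod_range_add _ n ((n-1)+1)
    _ = (∏ t ∈ Finset.range n, ((X : FK[X]) - C (muF n t)))
        * ((∏ t ∈ Finset.range (n-1), ((X : FK[X]) - C (muF n (n+t))))
          * ((X : FK[X]) - C (muF n (n+(n-1))))) := by
        rw [Finset.prod_range_succ]
    _ = (X - C U⁻¹) ^ n * ((X + C U) ^ (n-1) * (X + C (U ^ (2 * (n:ℤ) + 1)))) := by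
        congr 1
        · calc ∏ t ∈ Finset.range n, ((X : FK[X]) - C (muF n t))
              = ∏ _t ∈ Finset.range n, ((X : FK[X]) - C U⁻¹) := by
                apply Finset.prod_congr rfl
                intro t ht
                rw [muF, if_pos (Finset.mem_range.mp ht)]
            _ = (X - C U⁻¹) ^ n := by rw [Finset.prod_const, Finset.card_range]
        · congr 1
          · calc ∏ t ∈ Finset.range (n-1), ((X : FK[X]) - C (muF n (n+t)))
                = ∏ _t ∈ Finset.range (n-1), ((X : FK[X]) + C U) := by
                  apply Finset.prod_congr rfl
                  intro t ht
                  have ht' : t < n - 1 := Finset.mem_range.mp ht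
                  rw [muF, if_neg (by omega), if_pos (by omega), map_neg, sub_neg_eq_add]
              _ = (X + C U) ^ (n-1) := by rw [Finset.prod_const, Finset.card_range]
          · rw [show n + (n-1) = 2*n - 1 from by omega, muF, if_neg (by omega),
              if_neg (by omega), map_neg, sub_neg_eq_add]
    _ = (X - C U⁻¹) ^ n * (X + C U) ^ (n-1) * (X + C (U ^ (2 * (n:ℤ) + 1))) := by ring

end C14

/-- The characteristic polynomial of the braiding matrix of `C_n` on the
invariant subspace with basis `{e_{(a,2n-1-a)}}` is
`(X - u⁻¹)^n (X + u)^{n-1} (X + u^{2n+1})`: the eigenvalues are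
`q^{-1/4} = u⁻¹` with multiplicity `n`, `-q^{1/4} = -u` with multiplicity
`n-1`, and `-q^{(2n+1)/4} = -u^{2n+1}` with multiplicity `1`. -/
theorem stmt14 (n : ℕ) (hn : 1 ≤ n) :
    (NC n).charpoly =
      (Polynomial.X - Polynomial.C U⁻¹) ^ n *
        (Polynomial.X + Polynomial.C U) ^ (n - 1) *
        (Polynomial.X + Polynomial.C (U ^ (2 * (n : ℤ) + 1))) := by
  rw [C14.charpoly_NC_eq_D hn, C14.charpoly_D, C14.prod_mu hn]

end
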